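/- There exists a constant C > 0 such that for every horizon T ≥ 4 there is a deterministic one-bit-feedback context-free algorithm (which may depend on T) posting price pairs p_t ≤ q_t such that for all s, b with 0 ≤ s ≤ b ≤ 1, the profit regret satisfies ∑_{t=1}^T (b − s) − ∑_{t=1}^T (q_t − p_t)·1{s ≤ p_t and q_t ≤ b} ≤ C · (1 + log(log T)). (The dyadic search followed by recursive quadratic search achieves this.) -/

import Mathlib

open Finset

noncomputable section

abbrev AlgoCF2 := List (ℝ × ℝ × Bool) → ℝ × ℝ

def histCF2 (Alg : AlgoCF2) (s b : ℝ) : ℕ → List (ℝ × ℝ × Bool)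
  | 0 => []
  | t + 1 =>
    let h := histCF2 Alg s b t
    let pq := Alg h
    h ++ [(pq.1, pq.2, decide (s ≤ pq.1 ∧ pq.2 ≤ b))]

def priceCF2 (Alg : AlgoCF2) (s b : ℝ) (t : ℕ) : ℝ × ℝ :=
  Alg (histCF2 Alg s b t)

namespace BT2

/-! ### The dyadic enumeration -/

/-- level of the `n`-th dyadic test point (starting from 1). -/
def lvl (n : ℕ) : ℕ := Nat.size (n + 1)

/-- the `n`-th dyadic test point: `n = 2^(k-1) - 1 + t` maps to `(2t+1)/2^k`. -/
def dpt (n : ℕ) : ℝ := ((2 * (n + 1 - 2 ^ (lvl n - 1)) + 1 : ℕ) : ℝ) / 2 ^ lvl n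

def dlt (n : ℕ) : ℝ := 1 / 2 ^ lvl n

lemma lvl_pos (n : ℕ) : 1 ≤ lvl n := by
  have : lvl n ≠ 0 := by simp [lvl, Nat.size_eq_zero]
  omega

lemma two_pow_lvl_pred_le (n : ℕ) : 2 ^ (lvl n - 1) ≤ n + 1 := by
  have h := lvl_pos n
  have : lvl n - 1 < Nat.size (n+1) := by simp only [lvl] at h ⊢; omega
  exact Nat.lt_size.mp this

lemma lt_two_pow_lvl (n : ℕ) : n + 1 < 2 ^ lvl n := Nat.lt_size_self (n+1)

lemma size_eq_succ {k m : ℕ} (h1 : 2 ^ k ≤ m) (h2 : m < 2 ^ (k+1)) : Nat.size m = k + 1 := by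
  have hle : Nat.size m ≤ k + 1 := Nat.size_le.mpr h2
  have hlt : k < Nat.size m := Nat.lt_size.mpr h1
  omega

/-- every dyadic rational `a/2^k` with `0 < a < 2^k` occurs as `dpt i` with `i + 1 < 2^k`. -/
lemma dpt_surj : ∀ k a : ℕ, 0 < a → a < 2 ^ k → ∃ i, i + 1 < 2 ^ k ∧ dpt i = (a : ℝ) / 2 ^ k := by
  intro k
  induction k with
  | zero => intro a h1 h2; omega
  | succ k ih =>
    intro a h1 h2
    rcases Nat.even_or_odd a with he | ho
    · obtain ⟨t, ht⟩ := he
      have ht' : a = 2 * t := by omega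
      have h1' : 0 < t := by omega
      have h2' : t < 2 ^ k := by
        have : 2 ^ (k+1) = 2 * 2 ^ k := by ring
        omega
      obtain ⟨i, hi1, hi2⟩ := ih t h1' h2'
      refine ⟨i, ?_, ?_⟩
      · have : 2 ^ (k+1) = 2 * 2 ^ k := by ring
        omega
      · rw [hi2, ht']
        push_cast
        rw [pow_succ]
        field_simp
    · obtain ⟨t, ht⟩ := ho
      have h2' : t < 2 ^ k := by omega
      refine ⟨2 ^ k - 1 + t, ?_, ?_⟩
      · have hp : 1 ≤ 2 ^ k := Nat.one_le_two_pow
        have h2k : 2 ^ (k+1) = 2 * 2 ^ k := by ring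
        omega
      · have hp : 1 ≤ 2 ^ k := Nat.one_le_two_pow
        have hidx : 2 ^ k - 1 + t + 1 = 2 ^ k + t := by omega
        have hlvl : lvl (2 ^ k - 1 + t) = k + 1 := by
          unfold lvl
          rw [hidx]
          refine size_eq_succ (by omega) ?_
          have h2k : 2 ^ (k+1) = 2 * 2 ^ k := by ring
          omega
        unfold dpt
        rw [hlvl, hidx]
        have hs1 : k + 1 - 1 = k := rfl
        rw [hs1, Nat.add_sub_cancel_left, ht]

/-- if `b - s ≥ 2/2^k` then some proper dyadic `a/2^k` lies in `[s,b]`. -/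
lemma grid_hit {s b : ℝ} (hs0 : 0 ≤ s) (hb1 : b ≤ 1) (k : ℕ)
    (hgap : 2 / 2 ^ k ≤ b - s) :
    ∃ a : ℕ, 0 < a ∧ a < 2 ^ k ∧ s ≤ (a : ℝ) / 2 ^ k ∧ (a : ℝ) / 2 ^ k ≤ b := by
  have hpow : (0:ℝ) < 2 ^ k := by positivity
  set a : ℕ := ⌊s * 2 ^ k⌋₊ + 1 with ha
  have hnn : 0 ≤ s * 2 ^ k := by positivity
  have hfl : (⌊s * 2 ^ k⌋₊ : ℝ) ≤ s * 2 ^ k := Nat.floor_le hnn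
  have hflt : s * 2 ^ k < (⌊s * 2 ^ k⌋₊ : ℝ) + 1 := Nat.lt_floor_add_one _
  have haR : (a : ℝ) ≤ s * 2 ^ k + 1 := by push_cast [ha]; linarith
  have hgap2 : 2 ≤ (b - s) * 2 ^ k := by
    have := (div_le_iff₀ hpow).mp hgap
    linarith
  refine ⟨a, by omega, ?_, ?_, ?_⟩
  · -- a < 2^k
    have h5 : (a : ℝ) < 2 ^ k := by nlinarith
    exact_mod_cast h5
  · -- s ≤ a / 2^k
    rw [le_div_iff₀ hpow]
    push_cast [ha]
    linarith
  · -- a / 2^k ≤ b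
    rw [div_le_iff₀ hpow]
    nlinarith

/-- failure of all tests below `ν` forces `(ν+1)(b-s) ≤ 4`. -/
lemma formA {s b : ℝ} (hs0 : 0 ≤ s) (hsb : s ≤ b) (hb1 : b ≤ 1) (ν : ℕ)
    (hf : ∀ i, i < ν → ¬(s ≤ dpt i ∧ dpt i ≤ b)) :
    ((ν : ℝ) + 1) * (b - s) ≤ 4 := by
  rcases Nat.eq_zero_or_pos ν with h0 | hpos
  · subst h0; simp; nlinarith
  set k := Nat.size ν with hk
  have hk1 : 1 ≤ k := by
    have : Nat.size ν ≠ 0 := by simp [Nat.size_eq_zero]; omega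
    omega
  have hν2 : 2 ^ (k - 1) ≤ ν := by
    have : k - 1 < Nat.size ν := by omega
    exact Nat.lt_size.mp this
  have hν3 : ν < 2 ^ k := Nat.lt_size_self ν
  -- gap bound
  have hgap : b - s < 2 / 2 ^ (k - 1) := by
    by_contra hcon
    push_neg at hcon
    obtain ⟨a, ha1, ha2, ha3, ha4⟩ := grid_hit hs0 hb1 (k-1) hcon
    obtain ⟨i, hi1, hi2⟩ := dpt_surj (k-1) a ha1 ha2
    exact hf i (by omega) ⟨by rw [hi2]; exact ha3, by rw [hi2]; exact ha4⟩
  have hcast : ((ν:ℝ) + 1) ≤ 2 ^ k := by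
    have : (ν:ℝ) + 1 ≤ (2 ^ k : ℕ) := by exact_mod_cast hν3
    simpa using this
  have hbs : 0 ≤ b - s := by linarith
  have hsplit : (2:ℝ) ^ k = 2 * 2 ^ (k-1) := by
    rw [← pow_succ']
    congr 1
    omega
  have hp : (0:ℝ) < 2 ^ (k-1) := by positivity
  calc ((ν : ℝ) + 1) * (b - s) ≤ 2 ^ k * (2 / 2 ^ (k-1)) := by
        apply mul_le_mul hcast (le_of_lt hgap) hbs (by positivity)
    _ = 4 := by rw [hsplit]; field_simp; ring
  
/-- failure of all tests below `2^k - 1` forces `b - s ≤ 2/2^k`. -/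
lemma formB {s b : ℝ} (hs0 : 0 ≤ s) (hb1 : b ≤ 1) (k : ℕ)
    (hf : ∀ i, i < 2 ^ k - 1 → ¬(s ≤ dpt i ∧ dpt i ≤ b)) :
    b - s ≤ 2 / 2 ^ k := by
  by_contra hcon
  push_neg at hcon
  obtain ⟨a, ha1, ha2, ha3, ha4⟩ := grid_hit hs0 hb1 k (le_of_lt hcon)
  obtain ⟨i, hi1, hi2⟩ := dpt_surj k a ha1 ha2
  exact hf i (by omega) ⟨by rw [hi2]; exact ha3, by rw [hi2]; exact ha4⟩


lemma dlt_pos (n : ℕ) : 0 < dlt n := by unfold dlt; positivity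

lemma dlt_le_half (n : ℕ) : dlt n ≤ 1 / 2 := by
  unfold dlt
  have h1 : (2:ℝ) ≤ 2 ^ lvl n := by
    calc (2:ℝ) = 2 ^ 1 := (pow_one 2).symm
    _ ≤ 2 ^ lvl n := pow_le_pow_right₀ one_le_two (lvl_pos n)
  rw [div_le_div_iff₀ (by positivity) (by norm_num)]
  linarith

lemma two_pow_lvl_split (n : ℕ) : (2:ℝ) ^ lvl n = 2 * 2 ^ (lvl n - 1) := by
  rw [← pow_succ']
  congr 1
  have := lvl_pos n
  omega

/-- left neighbor: if all earlier tests failed and `dpt n ≤ b`, then `dpt n - dlt n ≤ s`. -/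
lemma neighbor_left {s b : ℝ} (n : ℕ) (hs0 : 0 ≤ s)
    (hf : ∀ i, i < n → ¬(s ≤ dpt i ∧ dpt i ≤ b)) (hmb : dpt n ≤ b) :
    dpt n - dlt n ≤ s := by
  set K := lvl n with hK
  set j := n + 1 - 2 ^ (K - 1) with hj
  have hK1 : 1 ≤ K := lvl_pos n
  have hn1 : 2 ^ (K - 1) ≤ n + 1 := two_pow_lvl_pred_le n
  have hn2 : n + 1 < 2 ^ K := lt_two_pow_lvl n
  have h2K : 2 ^ K = 2 * 2 ^ (K - 1) := by
    rw [← pow_succ']; congr 1; omega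
  have hjlt : j < 2 ^ (K - 1) := by omega
  have h2R : (2:ℝ) ^ K = 2 * 2 ^ (K - 1) := two_pow_lvl_split n
  have hx : dpt n - dlt n = (j : ℝ) / 2 ^ (K - 1) := by
    unfold dpt dlt
    rw [← hK, ← hj]
    push_cast
    rw [h2R]
    have : ((2:ℝ)) ^ (K-1) ≠ 0 := by positivity
    field_simp
    ring
  rcases Nat.eq_zero_or_pos j with h0 | hjpos
  · rw [hx, h0]; simpa using hs0
  · obtain ⟨i, hi1, hi2⟩ := dpt_surj (K - 1) j hjpos hjlt
    have hin : i < n := by omega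
    have hxb : dpt i ≤ b := by
      rw [hi2, ← hx]
      have := dlt_pos n
      linarith
    have := hf i hin
    have hns : ¬ (s ≤ dpt i) := fun hc => this ⟨hc, hxb⟩
    rw [hi2, ← hx] at hns
    linarith [not_le.mp hns]

/-- right neighbor: if all earlier tests failed and `s ≤ dpt n`, then `b ≤ dpt n + dlt n`. -/
lemma neighbor_right {s b : ℝ} (n : ℕ) (hb1 : b ≤ 1)
    (hf : ∀ i, i < n → ¬(s ≤ dpt i ∧ dpt i ≤ b)) (hsm : s ≤ dpt n) :
    b ≤ dpt n + dlt n := by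
  set K := lvl n with hK
  set j := n + 1 - 2 ^ (K - 1) with hj
  have hK1 : 1 ≤ K := lvl_pos n
  have hn1 : 2 ^ (K - 1) ≤ n + 1 := two_pow_lvl_pred_le n
  have hn2 : n + 1 < 2 ^ K := lt_two_pow_lvl n
  have h2K : 2 ^ K = 2 * 2 ^ (K - 1) := by
    rw [← pow_succ']; congr 1; omega
  have hjlt : j < 2 ^ (K - 1) := by omega
  have h2R : (2:ℝ) ^ K = 2 * 2 ^ (K - 1) := two_pow_lvl_split n
  have hx : dpt n + dlt n = ((j : ℝ) + 1) / 2 ^ (K - 1) := by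
    unfold dpt dlt
    rw [← hK, ← hj]
    push_cast
    rw [h2R]
    have : ((2:ℝ)) ^ (K-1) ≠ 0 := by positivity
    field_simp
    ring
  rcases eq_or_lt_of_le (Nat.succ_le_of_lt hjlt) with h0 | hjlt'
  · -- j + 1 = 2^(K-1) : the right neighbor is 1
    have hcast : ((j:ℝ) + 1) = 2 ^ (K - 1) := by exact_mod_cast h0
    have : dpt n + dlt n = 1 := by
      rw [hx, hcast]
      field_simp
    linarith
  · obtain ⟨i, hi1, hi2⟩ := dpt_surj (K - 1) (j + 1) (by omega) hjlt'
    have hin : i < n := by omega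
    have hxs : s ≤ dpt i := by
      rw [hi2]
      push_cast
      rw [← hx]
      have := dlt_pos n
      linarith
    have := hf i hin
    have hnb : ¬ (dpt i ≤ b) := fun hc => this ⟨hxs, hc⟩
    rw [hi2] at hnb
    push_cast at hnb
    rw [← hx] at hnb
    linarith [not_le.mp hnb]

/-! ### the search machine -/

def wj (j : ℕ) (δ : ℝ) : ℝ := δ / 2 ^ (2 ^ j)
def Ub (j : ℕ) (δ : ℝ) : ℝ := δ / 2 ^ (2 ^ j / 2)
def cst (j : ℕ) (δ : ℝ) : ℝ := 2 * Ub j δ / wj j δ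

lemma wj_pos {j : ℕ} {δ : ℝ} (h : 0 < δ) : 0 < wj j δ := by unfold wj; positivity
lemma wj_nonneg {j : ℕ} {δ : ℝ} (h : 0 ≤ δ) : 0 ≤ wj j δ := by unfold wj; positivity
lemma Ub_pos {j : ℕ} {δ : ℝ} (h : 0 < δ) : 0 < Ub j δ := by unfold Ub; positivity

lemma wj_le_Ub {j : ℕ} {δ : ℝ} (h : 0 ≤ δ) : wj j δ ≤ Ub j δ := by
  unfold wj Ub
  gcongr
  · norm_num
  · exact Nat.div_le_self _ _

lemma one_le_two_pow_real (m : ℕ) : (1:ℝ) ≤ 2 ^ m := one_le_pow₀ one_le_two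

lemma Ub_le_delta {j : ℕ} {δ : ℝ} (h : 0 ≤ δ) : Ub j δ ≤ δ := by
  unfold Ub
  exact div_le_self h (one_le_two_pow_real _)

lemma cst_nonneg {j : ℕ} {δ : ℝ} (h : 0 < δ) : 0 ≤ cst j δ := by
  unfold cst
  have := Ub_pos (j := j) h
  have := wj_pos (j := j) h
  positivity

lemma cst_mul_wj {j : ℕ} {δ : ℝ} (h : 0 < δ) : cst j δ * wj j δ = 2 * Ub j δ := by
  unfold cst
  exact div_mul_cancel₀ _ (ne_of_gt (wj_pos h))

lemma cst_eq {j : ℕ} {δ : ℝ} (h : 0 < δ) :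
    cst j δ = 2 * 2 ^ (2 ^ j) / 2 ^ (2 ^ j / 2) := by
  unfold cst Ub wj
  have hδ : δ ≠ 0 := h.ne'
  have hA : ((2:ℝ)) ^ (2 ^ j / 2) ≠ 0 := by positivity
  have hB : ((2:ℝ)) ^ (2 ^ j) ≠ 0 := by positivity
  field_simp

lemma cst_mul_Ub_le {j : ℕ} {δ : ℝ} (h : 0 < δ) : cst j δ * Ub j δ ≤ 4 * δ := by
  rw [cst_eq h]
  unfold Ub
  have hA : (0:ℝ) < 2 ^ (2 ^ j / 2) := by positivity
  have hB : (0:ℝ) < 2 ^ (2 ^ j) := by positivity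
  have hBA : (2:ℝ) ^ (2 ^ j) ≤ 2 * (2 ^ (2 ^ j / 2) * 2 ^ (2 ^ j / 2)) := by
    calc (2:ℝ) ^ (2 ^ j) ≤ 2 ^ (2 ^ j / 2 + 2 ^ j / 2 + 1) :=
          pow_le_pow_right₀ one_le_two (by omega)
    _ = 2 * (2 ^ (2 ^ j / 2) * 2 ^ (2 ^ j / 2)) := by rw [pow_add, pow_add, pow_one]; ring
  have key : 2 * 2 ^ (2 ^ j) / 2 ^ (2 ^ j / 2) * (δ / 2 ^ (2 ^ j / 2))
      = 2 * δ * 2 ^ (2 ^ j) / (2 ^ (2 ^ j / 2) * 2 ^ (2 ^ j / 2)) := by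
    field_simp
  rw [key]
  rw [div_le_iff₀ (by positivity)]
  nlinarith

lemma Ub_succ (j : ℕ) (δ : ℝ) : Ub (j + 1) δ = wj j δ := by
  unfold Ub wj
  have hs : 2 ^ (j + 1) / 2 = 2 ^ j := by
    rw [pow_succ]
    exact Nat.mul_div_cancel _ (by norm_num)
  rw [hs]

lemma cst_zero {δ : ℝ} (h : 0 < δ) : cst 0 δ = 4 := by
  unfold cst Ub wj
  norm_num
  field_simp
  ring


/-! ### machine -/

inductive St
  | dy (n : ℕ)
  | sr (sideB : Bool) (j : ℕ) (dl slo shi blo bhi : ℝ)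
  | ex (shi blo : ℝ)

def LL (T : ℕ) : ℕ := Nat.clog 2 T
def NN (T : ℕ) : ℕ := 2 ^ LL T - 1
def JJ (T : ℕ) : ℕ := Nat.log 2 (Nat.log 2 T) + 2

def price (T : ℕ) : St → ℝ × ℝ
  | .dy n => if n < NN T then (dpt n, dpt n) else (0, 1)
  | .sr false j δ slo shi blo _ => (max slo (shi - wj j δ), blo)
  | .sr true j δ _ shi blo bhi => (shi, min bhi (blo + wj j δ))
  | .ex shi blo => (shi, blo)

def step (T : ℕ) : St → Bool → St
  | .dy n, bit =>
      if n < NN T ∧ bit = true then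
        .sr false 0 (dlt n) (dpt n - dlt n) (dpt n) (dpt n) (dpt n + dlt n)
      else .dy (n + 1)
  | .sr false j δ slo shi blo bhi, bit =>
      if bit = true then
        (if max slo (shi - wj j δ) - slo ≤ wj j δ then
           .sr true j δ slo (max slo (shi - wj j δ)) blo bhi
         else .sr false j δ slo (max slo (shi - wj j δ)) blo bhi)
      else .sr true j δ (max slo (shi - wj j δ)) shi blo bhi
  | .sr true j δ slo shi blo bhi, bit =>
      if bit = true then
        (if bhi - min bhi (blo + wj j δ) ≤ wj j δ then
           (if wj j δ ≤ 1 / (T:ℝ) then .ex shi (min bhi (blo + wj j δ))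
            else .sr false (j+1) δ slo shi (min bhi (blo + wj j δ)) bhi)
         else .sr true j δ slo shi (min bhi (blo + wj j δ)) bhi)
      else
        (if wj j δ ≤ 1 / (T:ℝ) then .ex shi blo
         else .sr false (j+1) δ slo shi blo (min bhi (blo + wj j δ)))
  | .ex shi blo, _ => .ex shi blo

/-- structural invariant, valid for arbitrary bit sequences -/
def SI : St → Prop
  | .dy _ => True
  | .sr _ _ δ slo shi blo bhi => 0 ≤ δ ∧ slo ≤ shi ∧ shi ≤ blo ∧ blo ≤ bhi
  | .ex shi blo => shi ≤ blo

lemma SI_step (T : ℕ) (σ : St) (bit : Bool) (h : SI σ) : SI (step T σ bit) := by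
  cases σ with
  | dy n =>
      simp only [step]
      by_cases hc : n < NN T ∧ bit = true
      · rw [if_pos hc]
        have h1 := dlt_pos n
        exact ⟨le_of_lt h1, by linarith, le_refl _, by linarith⟩
      · rw [if_neg hc]; trivial
  | sr sideB j δ slo shi blo bhi =>
      obtain ⟨h0, h1, h2, h3⟩ := h
      have hw : 0 ≤ wj j δ := wj_nonneg h0
      cases sideB with
      | false =>
          simp only [step]
          have hmax1 : slo ≤ max slo (shi - wj j δ) := le_max_left _ _
          have hmax2 : max slo (shi - wj j δ) ≤ shi := max_le h1 (by linarith)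
          by_cases hb : bit = true
          · rw [if_pos hb]
            by_cases hc : max slo (shi - wj j δ) - slo ≤ wj j δ
            · rw [if_pos hc]; exact ⟨h0, hmax1, by linarith, h3⟩
            · rw [if_neg hc]; exact ⟨h0, hmax1, by linarith, h3⟩
          · rw [if_neg hb]; exact ⟨h0, hmax2, h2, h3⟩
      | true =>
          simp only [step]
          have hmin1 : blo ≤ min bhi (blo + wj j δ) := le_min h3 (by linarith)
          have hmin2 : min bhi (blo + wj j δ) ≤ bhi := min_le_left _ _
          by_cases hb : bit = true
          · rw [if_pos hb]
            by_cases hc : bhi - min bhi (blo + wj j δ) ≤ wj j δ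
            · rw [if_pos hc]
              by_cases hd : wj j δ ≤ 1 / (T:ℝ)
              · rw [if_pos hd]; exact le_trans h2 hmin1
              · rw [if_neg hd]; exact ⟨h0, h1, by linarith, hmin2⟩
            · rw [if_neg hc]; exact ⟨h0, h1, by linarith, hmin2⟩
          · rw [if_neg hb]
            by_cases hd : wj j δ ≤ 1 / (T:ℝ)
            · rw [if_pos hd]; exact h2
            · rw [if_neg hd]; exact ⟨h0, h1, h2, hmin1⟩
  | ex shi blo => exact h

lemma price_le (T : ℕ) (σ : St) (h : SI σ) : (price T σ).1 ≤ (price T σ).2 := by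
  cases σ with
  | dy n =>
      simp only [price]
      by_cases hc : n < NN T
      · rw [if_pos hc]
      · rw [if_neg hc]; norm_num
  | sr sideB j δ slo shi blo bhi =>
      obtain ⟨h0, h1, h2, h3⟩ := h
      have hw : 0 ≤ wj j δ := wj_nonneg h0
      cases sideB with
      | false =>
          show max slo (shi - wj j δ) ≤ blo
          exact max_le (by linarith) (by linarith)
      | true =>
          show shi ≤ min bhi (blo + wj j δ)
          exact le_min (by linarith) (by linarith)
  | ex shi blo => exact h

/-- the algorithm -/
def algo (T : ℕ) : AlgoCF2 :=
  fun h => price T (h.foldl (fun σ x => step T σ x.2.2) (.dy 0))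

lemma SI_foldl (T : ℕ) : ∀ (h : List (ℝ × ℝ × Bool)) (σ : St), SI σ →
    SI (h.foldl (fun σ x => step T σ x.2.2) σ) := by
  intro h
  induction h with
  | nil => intro σ hσ; exact hσ
  | cons x xs ih => intro σ hσ; exact ih _ (SI_step T σ x.2.2 hσ)

lemma algo_le (T : ℕ) (h : List (ℝ × ℝ × Bool)) : (algo T h).1 ≤ (algo T h).2 :=
  price_le T _ (SI_foldl T h _ trivial)

/-- state trajectory -/
def traj (T : ℕ) (s b : ℝ) : ℕ → St
  | 0 => .dy 0
  | t + 1 =>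
      step T (traj T s b t)
        (decide (s ≤ (price T (traj T s b t)).1 ∧ (price T (traj T s b t)).2 ≤ b))

lemma foldl_hist (T : ℕ) (s b : ℝ) :
    ∀ t, (histCF2 (algo T) s b t).foldl (fun σ x => step T σ x.2.2) (.dy 0) = traj T s b t := by
  intro t
  induction t with
  | zero => rfl
  | succ t ih =>
      have hh : histCF2 (algo T) s b (t+1)
          = histCF2 (algo T) s b t ++ [((algo T (histCF2 (algo T) s b t)).1,
              (algo T (histCF2 (algo T) s b t)).2,
              decide (s ≤ (algo T (histCF2 (algo T) s b t)).1 ∧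
                (algo T (histCF2 (algo T) s b t)).2 ≤ b))] := rfl
      rw [hh, List.foldl_append, ih]
      have hpq : algo T (histCF2 (algo T) s b t) = price T (traj T s b t) :=
        congrArg (price T) ih
      rw [hpq]
      rfl

lemma price_traj (T : ℕ) (s b : ℝ) (t : ℕ) :
    priceCF2 (algo T) s b t = price T (traj T s b t) :=
  congrArg (price T) (foldl_hist T s b t)

section Analysis

variable {T : ℕ} {s b : ℝ}

/-- semantic invariant along the real trajectory -/
def Inv (T : ℕ) (s b : ℝ) : St → Prop
  | .dy n => ∀ i, i < n → i < NN T → ¬(s ≤ dpt i ∧ dpt i ≤ b)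
  | .sr sideB j δ slo shi blo bhi =>
      slo ≤ s ∧ s ≤ shi ∧ blo ≤ b ∧ b ≤ bhi ∧ bhi - slo ≤ 2*δ ∧ 0 < δ ∧ δ ≤ 1/2 ∧
      j ≤ JJ T ∧
      shi - slo ≤ (bif sideB then wj j δ else Ub j δ) ∧ bhi - blo ≤ Ub j δ
  | .ex shi blo => s ≤ shi ∧ shi - s ≤ 1/(T:ℝ) ∧ blo ≤ b ∧ b - blo ≤ 1/(T:ℝ)

/-- the potential -/
def Phi (T : ℕ) (s b : ℝ) : St → ℝ
  | .dy n => 6*((JJ T : ℝ) + 1) + 5 - ((min n (NN T) : ℕ) : ℝ) * (b - s)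
  | .sr false j δ slo shi blo bhi =>
      cst j δ * (shi - slo) + 2*δ + cst j δ * (bhi - blo) + 2*δ + 12*δ*((JJ T - j : ℕ) : ℝ)
  | .sr true j δ _ _ blo bhi =>
      cst j δ * (bhi - blo) + 2*δ + 12*δ*((JJ T - j : ℕ) : ℝ)
  | .ex _ _ => 0

/-- per-round regret -/
def reg (T : ℕ) (s b : ℝ) (σ : St) : ℝ :=
  (b - s) - (if s ≤ (price T σ).1 ∧ (price T σ).2 ≤ b then
    (price T σ).2 - (price T σ).1 else 0)

lemma min_mul_gap_le (hs0 : 0 ≤ s) (hsb : s ≤ b) (hb1 : b ≤ 1)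
    {n m : ℕ} (hI : ∀ i, i < n → i < m → ¬(s ≤ dpt i ∧ dpt i ≤ b)) :
    ((min n m : ℕ) : ℝ) * (b - s) ≤ 4 := by
  have hf : ∀ i, i < min n m → ¬(s ≤ dpt i ∧ dpt i ≤ b) := by
    intro i hi
    exact hI i (lt_of_lt_of_le hi (min_le_left _ _)) (lt_of_lt_of_le hi (min_le_right _ _))
  have h4 := formA hs0 hsb hb1 (min n m) hf
  nlinarith [sub_nonneg.mpr hsb]

lemma Phi_nonneg (hT : 4 ≤ T) (hs0 : 0 ≤ s) (hsb : s ≤ b) (hb1 : b ≤ 1)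
    (σ : St) (hI : Inv T s b σ) : 0 ≤ Phi T s b σ := by
  cases σ with
  | dy n =>
      simp only [Inv] at hI
      simp only [Phi]
      have h4 := min_mul_gap_le hs0 hsb hb1 hI
      have hJ : (0:ℝ) ≤ (JJ T : ℝ) := Nat.cast_nonneg _
      linarith
  | sr sideB j δ slo shi blo bhi =>
      cases sideB with
      | false =>
          obtain ⟨i1,i2,i3,i4,i5,i6,i7,i8,i9,i10⟩ := hI
          simp only [Phi]
          have hc := cst_nonneg (j := j) i6
          have h3 : (0:ℝ) ≤ ((JJ T - j : ℕ):ℝ) := Nat.cast_nonneg _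
          nlinarith [mul_nonneg hc (by linarith : (0:ℝ) ≤ shi - slo),
            mul_nonneg hc (by linarith : (0:ℝ) ≤ bhi - blo)]
      | true =>
          obtain ⟨i1,i2,i3,i4,i5,i6,i7,i8,i9,i10⟩ := hI
          simp only [Phi]
          have hc := cst_nonneg (j := j) i6
          have h3 : (0:ℝ) ≤ ((JJ T - j : ℕ):ℝ) := Nat.cast_nonneg _
          nlinarith [mul_nonneg hc (by linarith : (0:ℝ) ≤ bhi - blo)]
  | ex shi blo => simp [Phi]

lemma Ub_zero (δ : ℝ) : Ub 0 δ = δ := by unfold Ub; norm_num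

lemma jJ_succ {j : ℕ} {δ : ℝ} (hT : 4 ≤ T) (hδ0 : 0 < δ) (hδ : δ ≤ 1/2)
    (h : ¬ (wj j δ ≤ 1/(T:ℝ))) : j + 1 ≤ JJ T := by
  push_neg at h
  unfold wj at h
  have hT0 : (0:ℝ) < T := by
    have : (4:ℝ) ≤ T := by exact_mod_cast hT
    linarith
  have hp : (0:ℝ) < 2^(2^j) := by positivity
  have h1 : (2:ℝ)^(2^j) < δ * T := by
    rw [div_lt_div_iff₀ hT0 hp] at h
    linarith
  have h2 : (2:ℝ)^(2^j) < T := by nlinarith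
  have h3 : (2:ℕ)^(2^j) < T := by exact_mod_cast h2
  have h5 : 2^j ≤ Nat.log 2 T := (Nat.le_log_iff_pow_le one_lt_two (by omega)).mpr (le_of_lt h3)
  have hy : Nat.log 2 T ≠ 0 := by
    have : 1 ≤ 2^j := Nat.one_le_two_pow
    omega
  have h8 : j ≤ Nat.log 2 (Nat.log 2 T) := (Nat.le_log_iff_pow_le one_lt_two hy).mpr h5
  unfold JJ
  omega

lemma step_main_dy (hT : 4 ≤ T) (hs0 : 0 ≤ s) (hsb : s ≤ b) (hb1 : b ≤ 1)
    (n : ℕ) (hI : Inv T s b (.dy n)) :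
    Inv T s b (step T (.dy n) (decide (s ≤ (price T (.dy n)).1 ∧ (price T (.dy n)).2 ≤ b))) ∧
    reg T s b (.dy n) ≤ Phi T s b (.dy n) -
      Phi T s b (step T (.dy n)
        (decide (s ≤ (price T (.dy n)).1 ∧ (price T (.dy n)).2 ≤ b))) + 2/(T:ℝ) := by
  simp only [Inv] at hI
  have hT0 : (0:ℝ) < T := by
    have : (4:ℝ) ≤ T := by exact_mod_cast hT
    linarith
  have hTnn : (0:ℝ) ≤ 2/(T:ℝ) := by positivity
  by_cases hn : n < NN T
  · have hpr : price T (.dy n) = (dpt n, dpt n) := by simp only [price, if_pos hn]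
    by_cases htr : s ≤ dpt n ∧ dpt n ≤ b
    · -- successful test: move to the search phase
      have hbit : decide (s ≤ (price T (.dy n)).1 ∧ (price T (.dy n)).2 ≤ b) = true := by
        rw [hpr]; exact decide_eq_true htr
      rw [hbit]
      have hstep : step T (.dy n) true
          = .sr false 0 (dlt n) (dpt n - dlt n) (dpt n) (dpt n) (dpt n + dlt n) := by
        simp only [step]
        rw [if_pos ⟨hn, trivial⟩]
      rw [hstep]
      have hf : ∀ i, i < n → ¬(s ≤ dpt i ∧ dpt i ≤ b) := fun i hi => hI i hi (by omega)
      have hnl := neighbor_left n hs0 hf htr.2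
      have hnr := neighbor_right n hb1 hf htr.1
      have hd0 := dlt_pos n
      have hdh := dlt_le_half n
      constructor
      · simp only [Inv, Bool.cond_false]
        refine ⟨hnl, htr.1, htr.2, hnr, ?_, hd0, hdh, Nat.zero_le _, ?_, ?_⟩
        · show dpt n + dlt n - (dpt n - dlt n) ≤ 2 * dlt n
          ring_nf
          exact le_rfl
        · rw [Ub_zero]; linarith
        · rw [Ub_zero]; linarith
      · -- regret inequality
        simp only [reg, Phi]
        rw [hpr]
        rw [if_pos htr]
        have hmin : min n (NN T) = n := Nat.min_eq_left (le_of_lt hn)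
        rw [hmin]
        have h4 : ((n:ℝ) + 1) * (b - s) ≤ 4 := formA hs0 hsb hb1 n hf
        rw [cst_zero hd0]
        have hJ0 : ((JJ T - 0 : ℕ):ℝ) = (JJ T : ℝ) := by norm_num
        rw [hJ0]
        have hJnn : (0:ℝ) ≤ (JJ T :ℝ) := Nat.cast_nonneg _
        have h12 : 0 ≤ (1/2 - dlt n) * (JJ T:ℝ) :=
          mul_nonneg (by linarith) hJnn
        nlinarith
    · -- failed test
      have hbit : decide (s ≤ (price T (.dy n)).1 ∧ (price T (.dy n)).2 ≤ b) = false := by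
        rw [hpr]; exact decide_eq_false htr
      rw [hbit]
      have hstep : step T (.dy n) false = .dy (n+1) := by
        simp only [step]
        rw [if_neg (by simp)]
      rw [hstep]
      constructor
      · simp only [Inv]
        intro i hi1 hi2
        rcases Nat.lt_or_ge i n with h | h
        · exact hI i h hi2
        · have : i = n := by omega
          subst this
          exact fun hc => htr hc
      · simp only [reg, Phi]
        rw [hpr]
        rw [if_neg htr]
        have hmin : min n (NN T) = n := Nat.min_eq_left (le_of_lt hn)
        have hmin2 : min (n+1) (NN T) = n+1 := Nat.min_eq_left (by omega)
        rw [hmin, hmin2]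
        push_cast
        linarith
  · -- dyadic phase exhausted
    have hpr : price T (.dy n) = (0, 1) := by simp only [price, if_neg hn]
    have hstep : ∀ bit, step T (.dy n) bit = .dy (n+1) := by
      intro bit
      simp only [step]
      rw [if_neg (by intro hc; exact hn hc.1)]
    rw [hstep]
    have hmin : min n (NN T) = NN T := Nat.min_eq_right (by omega)
    have hmin2 : min (n+1) (NN T) = NN T := Nat.min_eq_right (by omega)
    constructor
    · simp only [Inv]
      intro i hi1 hi2
      exact hI i (by omega) hi2
    · simp only [reg, Phi]
      rw [hpr, hmin, hmin2]
      by_cases htr : s ≤ ((0:ℝ),(1:ℝ)).1 ∧ ((0:ℝ),(1:ℝ)).2 ≤ b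
      · rw [if_pos htr]
        simp only at htr
        norm_num
        linarith [htr.1, htr.2]
      · rw [if_neg htr]
        -- all grid points failed : b - s ≤ 2/2^(LL T) ≤ 2/T
        have hf : ∀ i, i < 2 ^ (LL T) - 1 → ¬(s ≤ dpt i ∧ dpt i ≤ b) := by
          intro i hi
          exact hI i (by unfold NN at hn; omega) (by unfold NN; omega)
        have hB := formB hs0 hb1 (LL T) hf
        have hTle : (T:ℝ) ≤ 2^(LL T) := by
          have := Nat.le_pow_clog one_lt_two T
          exact_mod_cast this
        have h2 : 2/(2:ℝ)^(LL T) ≤ 2/(T:ℝ) := by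
          apply div_le_div_of_nonneg_left (by norm_num) hT0 hTle
        linarith


lemma step_main_srf (hT : 4 ≤ T) (hs0 : 0 ≤ s) (hsb : s ≤ b) (hb1 : b ≤ 1)
    (j : ℕ) (δ slo shi blo bhi : ℝ)
    (hI : Inv T s b (.sr false j δ slo shi blo bhi)) :
    Inv T s b (step T (.sr false j δ slo shi blo bhi)
      (decide (s ≤ (price T (.sr false j δ slo shi blo bhi)).1 ∧
        (price T (.sr false j δ slo shi blo bhi)).2 ≤ b))) ∧
    reg T s b (.sr false j δ slo shi blo bhi) ≤ Phi T s b (.sr false j δ slo shi blo bhi) -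
      Phi T s b (step T (.sr false j δ slo shi blo bhi)
        (decide (s ≤ (price T (.sr false j δ slo shi blo bhi)).1 ∧
          (price T (.sr false j δ slo shi blo bhi)).2 ≤ b))) + 2/(T:ℝ) := by
  have hT0 : (0:ℝ) < T := by
    have : (4:ℝ) ≤ T := by exact_mod_cast hT
    linarith
  have hTnn : (0:ℝ) ≤ 2/(T:ℝ) := by positivity
  simp only [Inv, Bool.cond_false] at hI
  obtain ⟨i1,i2,i3,i4,i5,i6,i7,i8,i9,i10⟩ := hI
  have hw0 : 0 < wj j δ := wj_pos i6
  have hwU : wj j δ ≤ Ub j δ := wj_le_Ub (le_of_lt i6)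
  have hUδ : Ub j δ ≤ δ := Ub_le_delta (le_of_lt i6)
  have hcw : cst j δ * wj j δ = 2 * Ub j δ := cst_mul_wj i6
  have hc0 : 0 ≤ cst j δ := cst_nonneg i6
  have hps : max slo (shi - wj j δ) ≤ shi := max_le (by linarith) (by linarith)
  have hpl : slo ≤ max slo (shi - wj j δ) := le_max_left _ _
  have hpw : shi - wj j δ ≤ max slo (shi - wj j δ) := le_max_right _ _
  have hpr1 : (price T (.sr false j δ slo shi blo bhi)).1 = max slo (shi - wj j δ) := rfl
  have hpr2 : (price T (.sr false j δ slo shi blo bhi)).2 = blo := rfl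
  have hJnn : (0:ℝ) ≤ ((JJ T - j : ℕ):ℝ) := Nat.cast_nonneg _
  by_cases htr : s ≤ max slo (shi - wj j δ) ∧ blo ≤ b
  · have hbit : decide (s ≤ (price T (.sr false j δ slo shi blo bhi)).1 ∧
        (price T (.sr false j δ slo shi blo bhi)).2 ≤ b) = true := by
      rw [hpr1, hpr2]; exact decide_eq_true htr
    rw [hbit]
    by_cases hadv : max slo (shi - wj j δ) - slo ≤ wj j δ
    · -- success, stage ends
      have hstep : step T (.sr false j δ slo shi blo bhi) true
          = .sr true j δ slo (max slo (shi - wj j δ)) blo bhi := by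
        simp [step, hadv]
      rw [hstep]
      constructor
      · simp only [Inv, Bool.cond_true]
        exact ⟨i1, htr.1, i3, i4, i5, i6, i7, i8, hadv, i10⟩
      · simp only [reg, Phi]
        rw [hpr1, hpr2, if_pos htr]
        have hr1 : max slo (shi - wj j δ) - s ≤ shi - slo := by linarith
        have hr2 : b - blo ≤ Ub j δ := by linarith
        have hcs : 0 ≤ cst j δ * (shi - slo) := mul_nonneg hc0 (by linarith)
        linarith
    · -- success, stage continues
      have hstep : step T (.sr false j δ slo shi blo bhi) true
          = .sr false j δ slo (max slo (shi - wj j δ)) blo bhi := by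
        simp [step, hadv]
      rw [hstep]
      have hpe : max slo (shi - wj j δ) = shi - wj j δ := by
        rcases max_choice slo (shi - wj j δ) with h | h
        · exfalso; apply hadv; rw [h]; simp; linarith
        · exact h
      constructor
      · simp only [Inv, Bool.cond_false]
        exact ⟨i1, htr.1, i3, i4, i5, i6, i7, i8, by linarith, i10⟩
      · simp only [reg, Phi]
        rw [hpr1, hpr2, if_pos htr]
        have hkey : cst j δ * (shi - max slo (shi - wj j δ)) = 2 * Ub j δ := by
          rw [hpe]
          have h2 : shi - (shi - wj j δ) = wj j δ := by ring
          rw [h2, hcw]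
        have hr1 : max slo (shi - wj j δ) - s ≤ shi - slo - wj j δ := by
          rw [hpe]; linarith
        have hr2 : b - blo ≤ Ub j δ := by linarith
        have hdistrib : cst j δ * (shi - slo)
            - cst j δ * (max slo (shi - wj j δ) - slo)
            = cst j δ * (shi - max slo (shi - wj j δ)) := by ring
        have hmono : cst j δ * (max slo (shi - wj j δ) - slo) ≤ cst j δ * (shi - slo) :=
          mul_le_mul_of_nonneg_left (by linarith) hc0
        linarith
  · -- failure
    have hbit : decide (s ≤ (price T (.sr false j δ slo shi blo bhi)).1 ∧
        (price T (.sr false j δ slo shi blo bhi)).2 ≤ b) = false := by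
      rw [hpr1, hpr2]; exact decide_eq_false htr
    rw [hbit]
    have hplt : max slo (shi - wj j δ) < s := by
      by_contra hc
      exact htr ⟨not_lt.mp hc, i3⟩
    have hstep : step T (.sr false j δ slo shi blo bhi) false
        = .sr true j δ (max slo (shi - wj j δ)) shi blo bhi := by
      simp [step]
    rw [hstep]
    constructor
    · simp only [Inv, Bool.cond_true]
      exact ⟨le_of_lt hplt, i2, i3, i4, by linarith, i6, i7, i8, by linarith, i10⟩
    · simp only [reg, Phi]
      rw [hpr1, hpr2, if_neg htr]
      have hcs : 0 ≤ cst j δ * (shi - slo) := mul_nonneg hc0 (by linarith)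
      linarith

lemma step_main_srt (hT : 4 ≤ T) (hs0 : 0 ≤ s) (hsb : s ≤ b) (hb1 : b ≤ 1)
    (j : ℕ) (δ slo shi blo bhi : ℝ)
    (hI : Inv T s b (.sr true j δ slo shi blo bhi)) :
    Inv T s b (step T (.sr true j δ slo shi blo bhi)
      (decide (s ≤ (price T (.sr true j δ slo shi blo bhi)).1 ∧
        (price T (.sr true j δ slo shi blo bhi)).2 ≤ b))) ∧
    reg T s b (.sr true j δ slo shi blo bhi) ≤ Phi T s b (.sr true j δ slo shi blo bhi) -
      Phi T s b (step T (.sr true j δ slo shi blo bhi)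
        (decide (s ≤ (price T (.sr true j δ slo shi blo bhi)).1 ∧
          (price T (.sr true j δ slo shi blo bhi)).2 ≤ b))) + 2/(T:ℝ) := by
  have hT0 : (0:ℝ) < T := by
    have : (4:ℝ) ≤ T := by exact_mod_cast hT
    linarith
  have hTnn : (0:ℝ) ≤ 2/(T:ℝ) := by positivity
  simp only [Inv, Bool.cond_true] at hI
  obtain ⟨i1,i2,i3,i4,i5,i6,i7,i8,i9,i10⟩ := hI
  have hw0 : 0 < wj j δ := wj_pos i6
  have hwU : wj j δ ≤ Ub j δ := wj_le_Ub (le_of_lt i6)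
  have hUδ : Ub j δ ≤ δ := Ub_le_delta (le_of_lt i6)
  have hcw : cst j δ * wj j δ = 2 * Ub j δ := cst_mul_wj i6
  have hc0 : 0 ≤ cst j δ := cst_nonneg i6
  have hql : blo ≤ min bhi (blo + wj j δ) := le_min (by linarith) (by linarith)
  have hqh : min bhi (blo + wj j δ) ≤ bhi := min_le_left _ _
  have hqw : min bhi (blo + wj j δ) ≤ blo + wj j δ := min_le_right _ _
  have hpr1 : (price T (.sr true j δ slo shi blo bhi)).1 = shi := rfl
  have hpr2 : (price T (.sr true j δ slo shi blo bhi)).2 = min bhi (blo + wj j δ) := rfl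
  have hJnn : (0:ℝ) ≤ ((JJ T - j : ℕ):ℝ) := Nat.cast_nonneg _
  -- facts for the advance step
  have hUs : Ub (j+1) δ = wj j δ := Ub_succ j δ
  have hcUs : cst (j+1) δ * Ub (j+1) δ ≤ 4 * δ := cst_mul_Ub_le i6
  have hc0s : 0 ≤ cst (j+1) δ := cst_nonneg i6
  by_cases htr : s ≤ shi ∧ min bhi (blo + wj j δ) ≤ b
  · have hbit : decide (s ≤ (price T (.sr true j δ slo shi blo bhi)).1 ∧
        (price T (.sr true j δ slo shi blo bhi)).2 ≤ b) = true := by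
      rw [hpr1, hpr2]; exact decide_eq_true htr
    rw [hbit]
    by_cases hadv : bhi - min bhi (blo + wj j δ) ≤ wj j δ
    · by_cases hex : wj j δ ≤ 1/(T:ℝ)
      · -- move to exploitation
        have hexI : wj j δ ≤ ((T:ℝ))⁻¹ := by rw [← one_div]; exact hex
        have hstep : step T (.sr true j δ slo shi blo bhi) true
            = .ex shi (min bhi (blo + wj j δ)) := by
          simp [step, hadv, hexI]
        rw [hstep]
        constructor
        · simp only [Inv]
          refine ⟨i2, by linarith, htr.2, by linarith⟩
        · simp only [reg, Phi]
          rw [hpr1, hpr2, if_pos htr]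
          have hcs : 0 ≤ cst j δ * (bhi - blo) := mul_nonneg hc0 (by linarith)
          have h12 : 0 ≤ 12*δ*((JJ T - j : ℕ):ℝ) := by positivity
          have hr1 : shi - s ≤ wj j δ := by linarith
          have hr2 : b - min bhi (blo + wj j δ) ≤ wj j δ := by linarith
          linarith
      · -- advance to stage j+1
        have hjJ : j + 1 ≤ JJ T := jJ_succ hT i6 i7 hex
        have hexI : ¬ wj j δ ≤ ((T:ℝ))⁻¹ := by rw [← one_div]; exact hex
        have hstep : step T (.sr true j δ slo shi blo bhi) true
            = .sr false (j+1) δ slo shi (min bhi (blo + wj j δ)) bhi := by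
          simp [step, hadv, hexI]
        rw [hstep]
        have hcast : ((JJ T - j : ℕ):ℝ) = ((JJ T - (j+1) : ℕ):ℝ) + 1 := by
          have h : JJ T - j = (JJ T - (j+1)) + 1 := by omega
          rw [h]
          push_cast
          ring
        constructor
        · simp only [Inv, Bool.cond_false]
          refine ⟨i1, i2, htr.2, i4, i5, i6, i7, hjJ, ?_, ?_⟩
          · rw [hUs]; linarith
          · rw [hUs]; linarith
        · simp only [reg, Phi]
          rw [hpr1, hpr2, if_pos htr, hcast]
          have hcs : 0 ≤ cst j δ * (bhi - blo) := mul_nonneg hc0 (by linarith)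
          have hA : cst (j+1) δ * (shi - slo) ≤ 4 * δ := by
            calc cst (j+1) δ * (shi - slo) ≤ cst (j+1) δ * Ub (j+1) δ :=
                  mul_le_mul_of_nonneg_left (by rw [hUs]; linarith) hc0s
            _ ≤ 4 * δ := hcUs
          have hB : cst (j+1) δ * (bhi - min bhi (blo + wj j δ)) ≤ 4 * δ := by
            calc cst (j+1) δ * (bhi - min bhi (blo + wj j δ)) ≤ cst (j+1) δ * Ub (j+1) δ :=
                  mul_le_mul_of_nonneg_left (by rw [hUs]; linarith) hc0s
            _ ≤ 4 * δ := hcUs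
          have hr1 : shi - s ≤ wj j δ := by linarith
          have hr2 : b - min bhi (blo + wj j δ) ≤ wj j δ := by linarith
          linarith
    · -- success, stage continues
      have hstep : step T (.sr true j δ slo shi blo bhi) true
          = .sr true j δ slo shi (min bhi (blo + wj j δ)) bhi := by
        simp [step, hadv]
      rw [hstep]
      have hqe : min bhi (blo + wj j δ) = blo + wj j δ := by
        rcases min_choice bhi (blo + wj j δ) with h | h
        · exfalso; apply hadv; rw [h]; simp; linarith
        · exact h
      constructor
      · simp only [Inv, Bool.cond_true]
        exact ⟨i1, i2, htr.2, i4, i5, i6, i7, i8, i9, by linarith⟩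
      · simp only [reg, Phi]
        rw [hpr1, hpr2, if_pos htr]
        have hkey : cst j δ * (bhi - blo)
            - cst j δ * (bhi - min bhi (blo + wj j δ)) = 2 * Ub j δ := by
          rw [hqe]
          have h2 : (bhi - blo) - (bhi - (blo + wj j δ)) = wj j δ := by ring
          calc cst j δ * (bhi - blo) - cst j δ * (bhi - (blo + wj j δ))
              = cst j δ * ((bhi - blo) - (bhi - (blo + wj j δ))) := by ring
          _ = 2 * Ub j δ := by rw [h2, hcw]
        have hr1 : shi - s ≤ wj j δ := by linarith
        have hr2 : b - min bhi (blo + wj j δ) ≤ Ub j δ - wj j δ := by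
          rw [hqe]; linarith
        linarith
  · -- failure
    have hbit : decide (s ≤ (price T (.sr true j δ slo shi blo bhi)).1 ∧
        (price T (.sr true j δ slo shi blo bhi)).2 ≤ b) = false := by
      rw [hpr1, hpr2]; exact decide_eq_false htr
    rw [hbit]
    have hblt : b < min bhi (blo + wj j δ) := by
      by_contra hc
      exact htr ⟨i2, not_lt.mp hc⟩
    by_cases hex : wj j δ ≤ 1/(T:ℝ)
    · have hexI : wj j δ ≤ ((T:ℝ))⁻¹ := by rw [← one_div]; exact hex
      have hstep : step T (.sr true j δ slo shi blo bhi) false = .ex shi blo := by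
        simp [step, hexI]
      rw [hstep]
      constructor
      · simp only [Inv]
        refine ⟨i2, by linarith, i3, by linarith⟩
      · simp only [reg, Phi]
        rw [hpr1, hpr2, if_neg htr]
        have hcs : 0 ≤ cst j δ * (bhi - blo) := mul_nonneg hc0 (by linarith)
        have h12 : 0 ≤ 12*δ*((JJ T - j : ℕ):ℝ) := by positivity
        linarith
    · have hjJ : j + 1 ≤ JJ T := jJ_succ hT i6 i7 hex
      have hexI : ¬ wj j δ ≤ ((T:ℝ))⁻¹ := by rw [← one_div]; exact hex
      have hstep : step T (.sr true j δ slo shi blo bhi) false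
          = .sr false (j+1) δ slo shi blo (min bhi (blo + wj j δ)) := by
        simp [step, hexI]
      rw [hstep]
      have hcast : ((JJ T - j : ℕ):ℝ) = ((JJ T - (j+1) : ℕ):ℝ) + 1 := by
        have h : JJ T - j = (JJ T - (j+1)) + 1 := by omega
        rw [h]
        push_cast
        ring
      constructor
      · simp only [Inv, Bool.cond_false]
        refine ⟨i1, i2, i3, by linarith, by linarith, i6, i7, hjJ, ?_, ?_⟩
        · rw [hUs]; linarith
        · rw [hUs]; linarith
      · simp only [reg, Phi]
        rw [hpr1, hpr2, if_neg htr, hcast]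
        have hcs : 0 ≤ cst j δ * (bhi - blo) := mul_nonneg hc0 (by linarith)
        have hA : cst (j+1) δ * (shi - slo) ≤ 4 * δ := by
          calc cst (j+1) δ * (shi - slo) ≤ cst (j+1) δ * Ub (j+1) δ :=
                mul_le_mul_of_nonneg_left (by rw [hUs]; linarith) hc0s
          _ ≤ 4 * δ := hcUs
        have hB : cst (j+1) δ * (min bhi (blo + wj j δ) - blo) ≤ 4 * δ := by
          calc cst (j+1) δ * (min bhi (blo + wj j δ) - blo) ≤ cst (j+1) δ * Ub (j+1) δ :=
                mul_le_mul_of_nonneg_left (by rw [hUs]; linarith) hc0s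
          _ ≤ 4 * δ := hcUs
        linarith

lemma step_main_ex (hT : 4 ≤ T) (hs0 : 0 ≤ s) (hsb : s ≤ b) (hb1 : b ≤ 1)
    (shi blo : ℝ) (hI : Inv T s b (.ex shi blo)) :
    Inv T s b (step T (.ex shi blo)
      (decide (s ≤ (price T (.ex shi blo)).1 ∧ (price T (.ex shi blo)).2 ≤ b))) ∧
    reg T s b (.ex shi blo) ≤ Phi T s b (.ex shi blo) -
      Phi T s b (step T (.ex shi blo)
        (decide (s ≤ (price T (.ex shi blo)).1 ∧ (price T (.ex shi blo)).2 ≤ b))) + 2/(T:ℝ) := by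
  obtain ⟨i1, i2, i3, i4⟩ := hI
  have hstep : ∀ bit, step T (.ex shi blo) bit = .ex shi blo := fun _ => rfl
  rw [hstep]
  refine ⟨⟨i1, i2, i3, i4⟩, ?_⟩
  simp only [reg, Phi]
  have hpr1 : (price T (.ex shi blo)).1 = shi := rfl
  have hpr2 : (price T (.ex shi blo)).2 = blo := rfl
  rw [hpr1, hpr2, if_pos ⟨i1, i3⟩]
  have h1 : (b - s) - (blo - shi) = (shi - s) + (b - blo) := by ring
  rw [h1]
  have : 2/(T:ℝ) = 1/(T:ℝ) + 1/(T:ℝ) := by ring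
  linarith

lemma step_main (hT : 4 ≤ T) (hs0 : 0 ≤ s) (hsb : s ≤ b) (hb1 : b ≤ 1)
    (σ : St) (hI : Inv T s b σ) :
    Inv T s b (step T σ (decide (s ≤ (price T σ).1 ∧ (price T σ).2 ≤ b))) ∧
    reg T s b σ ≤ Phi T s b σ -
      Phi T s b (step T σ (decide (s ≤ (price T σ).1 ∧ (price T σ).2 ≤ b))) + 2/(T:ℝ) := by
  cases σ with
  | dy n => exact step_main_dy hT hs0 hsb hb1 n hI
  | sr sideB j δ slo shi blo bhi =>
      cases sideB with
      | false => exact step_main_srf hT hs0 hsb hb1 j δ slo shi blo bhi hI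
      | true => exact step_main_srt hT hs0 hsb hb1 j δ slo shi blo bhi hI
  | ex shi blo => exact step_main_ex hT hs0 hsb hb1 shi blo hI


lemma traj_sum (hT : 4 ≤ T) (hs0 : 0 ≤ s) (hsb : s ≤ b) (hb1 : b ≤ 1) :
    ∀ u : ℕ, Inv T s b (traj T s b u) ∧
      ∑ t ∈ Finset.range u, reg T s b (traj T s b t) ≤
        Phi T s b (traj T s b 0) - Phi T s b (traj T s b u) + u * (2/(T:ℝ)) := by
  intro u
  induction u with
  | zero =>
      constructor
      · intro i h1 h2; omega
      · simp
  | succ u ih =>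
      obtain ⟨hinv, hsum⟩ := ih
      obtain ⟨hinv', hstep⟩ := step_main hT hs0 hsb hb1 _ hinv
      constructor
      · exact hinv'
      · rw [Finset.sum_range_succ]
        push_cast
        have : Phi T s b (traj T s b (u+1)) =
            Phi T s b (step T (traj T s b u)
              (decide (s ≤ (price T (traj T s b u)).1 ∧ (price T (traj T s b u)).2 ≤ b))) := rfl
        rw [this]
        have h2 := hstep
        linarith

lemma final_numeric (T : ℕ) (hT : 4 ≤ T) :
    6*((JJ T:ℝ)+1) + 7 ≤ 100*(1 + Real.log (Real.log T)) := by
  have hT4 : (4:ℝ) ≤ (T:ℝ) := by exact_mod_cast hT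
  have hT0 : (0:ℕ) < T := by omega
  have hM2 : 2 ≤ Nat.log 2 T :=
    (Nat.le_log_iff_pow_le one_lt_two (by omega)).mpr (by norm_num; omega)
  have hM0 : Nat.log 2 T ≠ 0 := by omega
  set M := Nat.log 2 T with hMdef
  set K := Nat.log 2 M with hKdef
  have hK : (2:ℕ)^K ≤ M := Nat.pow_log_le_self 2 hM0
  have hMT : (2:ℕ)^M ≤ T := Nat.pow_log_le_self 2 (by omega)
  have hKr : (2:ℝ)^K ≤ (M:ℝ) := by exact_mod_cast hK
  have hMr : (2:ℝ)^M ≤ (T:ℝ) := by exact_mod_cast hMT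
  have hlog2 : (0.6931471803:ℝ) < Real.log 2 := Real.log_two_gt_d9
  have hlog2' : Real.log 2 < 0.6931471808 := Real.log_two_lt_d9
  have hM2r : (2:ℝ) ≤ (M:ℝ) := by exact_mod_cast hM2
  have hKl : (K:ℝ) * Real.log 2 ≤ Real.log (M:ℝ) := by
    calc (K:ℝ) * Real.log 2 = Real.log ((2:ℝ)^K) := (Real.log_pow 2 K ▸ rfl : (K:ℝ) * Real.log 2 = Real.log ((2:ℝ)^K))
    _ ≤ Real.log (M:ℝ) := Real.log_le_log (by positivity) hKr
  have hMl : (M:ℝ) * Real.log 2 ≤ Real.log (T:ℝ) := by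
    calc (M:ℝ) * Real.log 2 = Real.log ((2:ℝ)^M) := (Real.log_pow 2 M ▸ rfl : (M:ℝ) * Real.log 2 = Real.log ((2:ℝ)^M))
    _ ≤ Real.log (T:ℝ) := Real.log_le_log (by positivity) hMr
  have hlogTpos : 0 < Real.log (T:ℝ) := Real.log_pos (by linarith)
  have hMle : (M:ℝ) ≤ 2 * Real.log (T:ℝ) := by nlinarith
  have hlogM : Real.log (M:ℝ) ≤ Real.log (2 * Real.log (T:ℝ)) :=
    Real.log_le_log (by linarith) hMle
  have hexp : Real.log (2 * Real.log (T:ℝ))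
      = Real.log 2 + Real.log (Real.log (T:ℝ)) :=
    Real.log_mul (by norm_num) (ne_of_gt hlogTpos)
  have hlogT1 : 1 < Real.log (T:ℝ) := by
    have h4 : Real.log (4:ℝ) ≤ Real.log (T:ℝ) := Real.log_le_log (by norm_num) hT4
    have h4e : Real.log (4:ℝ) = 2 * Real.log 2 := by
      rw [show (4:ℝ) = 2^2 by norm_num, Real.log_pow]
      push_cast
      ring
    nlinarith
  have hx : 0 < Real.log (Real.log (T:ℝ)) := Real.log_pos hlogT1
  have hKb : (K:ℝ) * 0.6931471803 ≤ 1 + Real.log (Real.log (T:ℝ)) := by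
    have hKnn : (0:ℝ) ≤ (K:ℝ) := Nat.cast_nonneg _
    nlinarith
  have hJJ : (JJ T : ℝ) = (K:ℝ) + 2 := by
    rw [JJ, ← hMdef, ← hKdef]
    push_cast
    ring
  rw [hJJ]
  have hKnn : (0:ℝ) ≤ (K:ℝ) := Nat.cast_nonneg _
  nlinarith

lemma total_regret (T : ℕ) (hT : 4 ≤ T) {s b : ℝ}
    (hs0 : 0 ≤ s) (hsb : s ≤ b) (hb1 : b ≤ 1) :
    ∑ t ∈ Finset.range T, reg T s b (traj T s b t) ≤ 6*((JJ T:ℝ)+1) + 7 := by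
  have hT0 : (0:ℝ) < T := by
    have : (4:ℝ) ≤ T := by exact_mod_cast hT
    linarith
  obtain ⟨hinv, hsum⟩ := traj_sum hT hs0 hsb hb1 T
  have hΦ0 : Phi T s b (traj T s b 0) = 6*((JJ T:ℝ)+1) + 5 := by
    show Phi T s b (.dy 0) = _
    simp [Phi]
  have hΦT : 0 ≤ Phi T s b (traj T s b T) := Phi_nonneg hT hs0 hsb hb1 _ hinv
  have hTT : (T:ℝ) * (2/(T:ℝ)) = 2 := by field_simp
  rw [hΦ0, hTT] at hsum
  linarith

end Analysis

end BT2


/-- Context-free profit maximization with one-bit feedback: for every horizon `T ≥ 4`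
there is a deterministic budget balanced algorithm (dyadic search followed by recursive
quadratic search) with profit regret `O(log log T)`, uniformly over `0 ≤ s ≤ b ≤ 1`. -/
theorem exists_context_free_profit_algorithm :
    ∃ C : ℝ, 0 < C ∧
      ∀ T : ℕ, 4 ≤ T →
        ∃ Alg : AlgoCF2,
          (∀ h, (Alg h).1 ≤ (Alg h).2) ∧
          ∀ s b : ℝ, 0 ≤ s → s ≤ b → b ≤ 1 →
            ∑ _t ∈ Finset.range T, (b - s) -
              ∑ t ∈ Finset.range T,
                (if s ≤ (priceCF2 Alg s b t).1 ∧ (priceCF2 Alg s b t).2 ≤ b then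
                  (priceCF2 Alg s b t).2 - (priceCF2 Alg s b t).1 else 0)
              ≤ C * (1 + Real.log (Real.log T)) := by
  refine ⟨100, by norm_num, ?_⟩
  intro T hT
  refine ⟨BT2.algo T, BT2.algo_le T, ?_⟩
  intro s b hs0 hsb hb1
  have hkey : ∑ t ∈ Finset.range T,
      (if s ≤ (priceCF2 (BT2.algo T) s b t).1 ∧ (priceCF2 (BT2.algo T) s b t).2 ≤ b then
        (priceCF2 (BT2.algo T) s b t).2 - (priceCF2 (BT2.algo T) s b t).1 else 0)
      = ∑ t ∈ Finset.range T, ((b - s) - BT2.reg T s b (BT2.traj T s b t)) := by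
    refine Finset.sum_congr rfl fun t _ => ?_
    rw [BT2.price_traj T s b t]
    simp only [BT2.reg]
    ring
  have hsplit : ∑ t ∈ Finset.range T, ((b - s) - BT2.reg T s b (BT2.traj T s b t))
      = (∑ _t ∈ Finset.range T, (b - s)) - ∑ t ∈ Finset.range T, BT2.reg T s b (BT2.traj T s b t) :=
    Finset.sum_sub_distrib (fun _ => b - s) (fun t => BT2.reg T s b (BT2.traj T s b t))
  rw [hkey, hsplit]
  have h1 := BT2.total_regret T hT hs0 hsb hb1
  have h2 := BT2.final_numeric T hT
  linarith

end
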